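/- (Gallager's expurgated-code existence.) Let μ be a pairwise-independent ensemble with M' = 2M − 1 codewords (M ≥ 1, M' ≥ 2) and marginal Q, and let ρ ≥ 1. Then there exists a code c ∈ (𝒳^n)^{M'} such that at least M of the indices m ∈ {1, …, M'} satisfy P_{e,m}(c) ≤ 2^ρ · ( (M' − 1) · ∑_{x,x'∈𝒳^n} Q(x)Q(x')·Z(x,x')^{1/ρ} )^ρ. -/

import Mathlib

open scoped Classical

/-- `W` is a channel: nonnegative, and each row sums to one. -/
def IsChannel {𝒳 𝒴 : Type*} [Fintype 𝒴] (W : 𝒳 → 𝒴 → ℝ) : Prop :=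
  (∀ x y, 0 ≤ W x y) ∧ ∀ x, ∑ y, W x y = 1

/-- Maximum-likelihood error probability of message `m` under code `c`
(ties counted as errors). -/
noncomputable def Pem {𝒳 𝒴 : Type*} [Fintype 𝒴] {M : ℕ}
    (W : 𝒳 → 𝒴 → ℝ) (c : Fin M → 𝒳) (m : Fin M) : ℝ :=
  ∑ y, W (c m) y * (if ∃ k, k ≠ m ∧ W (c m) y ≤ W (c k) y then (1:ℝ) else 0)

/-- Bhattacharyya coefficient between inputs `x` and `x'`. -/
noncomputable def Bhat {𝒳 𝒴 : Type*} [Fintype 𝒴] (W : 𝒳 → 𝒴 → ℝ) (x x' : 𝒳) : ℝ :=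
  ∑ y, Real.sqrt (W x y * W x' y)

/-- `p` is a probability mass function on a finite type. -/
def IsPMF {α : Type*} [Fintype α] (p : α → ℝ) : Prop :=
  (∀ a, 0 ≤ p a) ∧ ∑ a, p a = 1

/-- Probability of the event `S` under the pmf `μ`. -/
noncomputable def pmfProb {α : Type*} [Fintype α] (μ : α → ℝ) (S : α → Prop) : ℝ :=
  ∑ a, if S a then μ a else 0

/-- Expectation of `f` under the pmf `μ`. -/
noncomputable def pmfExp {α : Type*} [Fintype α] (μ : α → ℝ) (f : α → ℝ) : ℝ :=
  ∑ a, μ a * f a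

section aux

variable {𝒳 𝒴 : Type*} [Fintype 𝒴]

lemma Pem_nonneg {M : ℕ} (W : 𝒳 → 𝒴 → ℝ) (hW0 : ∀ x y, 0 ≤ W x y)
    (c : Fin M → 𝒳) (m : Fin M) : 0 ≤ Pem W c m :=
  Finset.sum_nonneg fun y _ => mul_nonneg (hW0 _ _) (by split_ifs <;> norm_num)

lemma Bhat_nonneg (W : 𝒳 → 𝒴 → ℝ) (x x' : 𝒳) : 0 ≤ Bhat W x x' :=
  Finset.sum_nonneg fun y _ => Real.sqrt_nonneg _

lemma Pem_le_sum_Bhat {M : ℕ} (W : 𝒳 → 𝒴 → ℝ) (hW0 : ∀ x y, 0 ≤ W x y)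
    (c : Fin M → 𝒳) (m : Fin M) :
    Pem W c m ≤ ∑ k ∈ Finset.univ.filter (fun k => k ≠ m), Bhat W (c m) (c k) := by
  unfold Pem Bhat
  rw [Finset.sum_comm]
  apply Finset.sum_le_sum
  intro y _
  split_ifs with h
  · obtain ⟨k₀, hk₀, hle⟩ := h
    rw [mul_one]
    have h1 : W (c m) y ≤ Real.sqrt (W (c m) y * W (c k₀) y) := by
      have h2 := Real.sqrt_le_sqrt
        (mul_le_mul_of_nonneg_left hle (hW0 (c m) y))
      rwa [Real.sqrt_mul_self (hW0 (c m) y)] at h2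
    refine h1.trans (Finset.single_le_sum
      (f := fun k => Real.sqrt (W (c m) y * W (c k) y))
      (fun k _ => Real.sqrt_nonneg _) ?_)
    simp [hk₀]
  · rw [mul_zero]
    exact Finset.sum_nonneg fun k _ => Real.sqrt_nonneg _

lemma rpow_add_le_add_rpow_real {a b p : ℝ} (ha : 0 ≤ a) (hb : 0 ≤ b)
    (hp : 0 ≤ p) (hp1 : p ≤ 1) : (a + b) ^ p ≤ a ^ p + b ^ p := by
  lift a to NNReal using ha
  lift b to NNReal using hb
  exact_mod_cast NNReal.rpow_add_le_add_rpow a b hp hp1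

lemma rpow_sum_le_sum_rpow' {ι : Type*} (s : Finset ι) (f : ι → ℝ) {p : ℝ}
    (hp : 0 < p) (hp1 : p ≤ 1) (hf : ∀ i ∈ s, 0 ≤ f i) :
    (∑ i ∈ s, f i) ^ p ≤ ∑ i ∈ s, f i ^ p := by
  induction s using Finset.cons_induction with
  | empty => simp [Real.zero_rpow hp.ne']
  | cons a s ha ih =>
      rw [Finset.sum_cons, Finset.sum_cons]
      have h1 : (f a + ∑ i ∈ s, f i) ^ p ≤ f a ^ p + (∑ i ∈ s, f i) ^ p :=
        rpow_add_le_add_rpow_real (hf a (Finset.mem_cons_self a s))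
          (Finset.sum_nonneg fun i hi => hf i (Finset.mem_cons_of_mem hi)) hp.le hp1
      exact h1.trans (add_le_add_right (ih fun i hi => hf i (Finset.mem_cons_of_mem hi)) _)

lemma pmfExp_pair {α β : Type*} [Fintype α] [Fintype (β → α)]
    (μ : (β → α) → ℝ) (Q : α → ℝ) (m k : β)
    (hjoint : ∀ x x', pmfProb μ (fun c => c m = x ∧ c k = x') = Q x * Q x')
    (f : α → α → ℝ) :
    pmfExp μ (fun c => f (c m) (c k)) = ∑ x, ∑ x', Q x * Q x' * f x x' := by
  unfold pmfExp
  have h1 : ∀ x x', Q x * Q x' * f x x'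
      = ∑ c, (if c m = x ∧ c k = x' then μ c * f x x' else 0) := by
    intro x x'
    rw [← hjoint x x']
    unfold pmfProb
    rw [Finset.sum_mul]
    exact Finset.sum_congr rfl fun c _ => by split_ifs <;> simp
  simp_rw [h1]
  rw [show ∑ x, ∑ x', ∑ c : β → α, (if c m = x ∧ c k = x' then μ c * f x x' else 0)
      = ∑ c : β → α, ∑ x, ∑ x', (if c m = x ∧ c k = x' then μ c * f x x' else 0) from
    (Finset.sum_congr rfl fun x _ => Finset.sum_comm).trans Finset.sum_comm]
  refine Finset.sum_congr rfl fun c _ => ?_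
  rw [Finset.sum_eq_single (c m)]
  · rw [Finset.sum_eq_single (c k)]
    · simp
    · intro x' _ hx'; simp [Ne.symm hx']
    · simp
  · intro x _ hx
    have hx' : ¬(c m = x) := fun h => hx h.symm
    simp [hx']
  · simp

end aux

/-- `μ` is a pairwise-independent ensemble of `M` codewords with marginal `Q`:
each codeword has law `Q` and each pair of distinct codewords has law `Q × Q`. -/
def PairwiseIndepEnsemble {𝒳 : Type*} [Fintype 𝒳] {M : ℕ}
    (μ : (Fin M → 𝒳) → ℝ) (Q : 𝒳 → ℝ) : Prop :=
  IsPMF μ ∧ IsPMF Q ∧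
  (∀ (m : Fin M) (x : 𝒳), pmfProb μ (fun c => c m = x) = Q x) ∧
  (∀ (m k : Fin M), m ≠ k → ∀ (x x' : 𝒳),
    pmfProb μ (fun c => c m = x ∧ c k = x') = Q x * Q x')

/-- Gallager's expurgated-code existence: for a pairwise-independent
ensemble with `M' = 2M - 1` codewords there exists a code in which at least `M`
codewords satisfy the expurgated bound with `γ = 2`. -/
theorem gallager_expurgated_code_exists
    {𝒳 𝒴 : Type*} [Fintype 𝒳] [Fintype 𝒴] [Nonempty 𝒳] [Nonempty 𝒴]
    (n : ℕ) (hn : 1 ≤ n)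
    (W : (Fin n → 𝒳) → (Fin n → 𝒴) → ℝ) (hW : IsChannel W)
    (Q : (Fin n → 𝒳) → ℝ) (M : ℕ) (hM : 1 ≤ M)
    (M' : ℕ) (hM'eq : M' = 2 * M - 1) (hM' : 2 ≤ M')
    (μ : (Fin M' → (Fin n → 𝒳)) → ℝ) (hμ : PairwiseIndepEnsemble μ Q)
    (ρ : ℝ) (hρ : 1 ≤ ρ) :
    ∃ c : Fin M' → (Fin n → 𝒳),
      M ≤ (Finset.univ.filter (fun m : Fin M' =>
        Pem W c m ≤
          (2:ℝ) ^ ρ *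
            (((M' : ℝ) - 1) * ∑ x, ∑ x', Q x * Q x' * Bhat W x x' ^ (1/ρ)) ^ ρ)).card := by
  obtain ⟨hμpmf, hQpmf, hmarg, hjoint⟩ := hμ
  obtain ⟨hW0, hW1⟩ := hW
  have hρ0 : (0:ℝ) < ρ := lt_of_lt_of_le one_pos hρ
  have hs0 : (0:ℝ) < 1/ρ := by positivity
  have hs1 : 1/ρ ≤ 1 := by rw [div_le_one hρ0]; exact hρ
  set B0 : ℝ := ∑ x, ∑ x', Q x * Q x' * Bhat W x x' ^ (1/ρ) with hB0def
  have hB0 : 0 ≤ B0 := by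
    refine Finset.sum_nonneg fun x _ => Finset.sum_nonneg fun x' _ => ?_
    exact mul_nonneg (mul_nonneg (hQpmf.1 x) (hQpmf.1 x'))
      (Real.rpow_nonneg (Bhat_nonneg W x x') _)
  set B : ℝ := ((M':ℝ) - 1) * B0 with hBdef
  have hM'R : (2:ℝ) ≤ (M':ℝ) := by exact_mod_cast hM'
  have hB : 0 ≤ B := mul_nonneg (by linarith) hB0
  have hT : (2:ℝ) ^ ρ * B ^ ρ = (2*B) ^ ρ := (Real.mul_rpow (by norm_num) hB).symm
  simp_rw [hT]
  -- expectation bound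
  have hexp : ∀ m : Fin M',
      ∑ c, μ c * Pem W c m ^ (1/ρ) ≤ B := by
    intro m
    have hpoint : ∀ c : Fin M' → (Fin n → 𝒳), Pem W c m ^ (1/ρ) ≤
        ∑ k ∈ Finset.univ.filter (fun k => k ≠ m), Bhat W (c m) (c k) ^ (1/ρ) := by
      intro c
      calc Pem W c m ^ (1/ρ)
          ≤ (∑ k ∈ Finset.univ.filter (fun k => k ≠ m), Bhat W (c m) (c k)) ^ (1/ρ) :=
            Real.rpow_le_rpow (Pem_nonneg W hW0 c m) (Pem_le_sum_Bhat W hW0 c m) hs0.le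
        _ ≤ ∑ k ∈ Finset.univ.filter (fun k => k ≠ m), Bhat W (c m) (c k) ^ (1/ρ) :=
            rpow_sum_le_sum_rpow' _ _ hs0 hs1 (fun k _ => Bhat_nonneg W _ _)
    calc ∑ c, μ c * Pem W c m ^ (1/ρ)
        ≤ ∑ c, μ c * ∑ k ∈ Finset.univ.filter (fun k => k ≠ m),
            Bhat W (c m) (c k) ^ (1/ρ) :=
          Finset.sum_le_sum fun c _ => mul_le_mul_of_nonneg_left (hpoint c) (hμpmf.1 c)
      _ = ∑ k ∈ Finset.univ.filter (fun k => k ≠ m),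
            ∑ c, μ c * Bhat W (c m) (c k) ^ (1/ρ) := by
          simp_rw [Finset.mul_sum]; exact Finset.sum_comm
      _ = ∑ k ∈ Finset.univ.filter (fun k => k ≠ m), B0 := by
          refine Finset.sum_congr rfl fun k hk => ?_
          have hkm : k ≠ m := (Finset.mem_filter.mp hk).2
          rw [hB0def]
          exact pmfExp_pair μ Q m k (fun x x' => hjoint m k (Ne.symm hkm) x x')
            (fun x x' => Bhat W x x' ^ (1/ρ))
      _ = B := by
          rw [Finset.sum_const, nsmul_eq_mul, hBdef]
          congr 1
          rw [Finset.filter_ne', Finset.card_erase_of_mem (Finset.mem_univ m),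
            Finset.card_univ, Fintype.card_fin, Nat.cast_sub (by omega), Nat.cast_one]
  -- Markov bound per message
  have hmarkov : ∀ m : Fin M',
      pmfProb μ (fun c => ¬ (Pem W c m ≤ (2*B) ^ ρ)) ≤ 1/2 := by
    intro m
    rcases eq_or_lt_of_le hB with hB0' | hBpos
    · -- B = 0 case
      have hsum0 : ∑ c, μ c * Pem W c m ^ (1/ρ) = 0 :=
        le_antisymm (by simpa [← hB0'] using hexp m)
          (Finset.sum_nonneg fun c _ => mul_nonneg (hμpmf.1 c)
            (Real.rpow_nonneg (Pem_nonneg W hW0 c m) _))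
      have hall : ∀ c : Fin M' → (Fin n → 𝒳), μ c * Pem W c m ^ (1/ρ) = 0 := fun c =>
        (Finset.sum_eq_zero_iff_of_nonneg fun c _ => mul_nonneg (hμpmf.1 c)
          (Real.rpow_nonneg (Pem_nonneg W hW0 c m) _)).mp hsum0 c (Finset.mem_univ c)
      have : pmfProb μ (fun c => ¬ (Pem W c m ≤ (2*B) ^ ρ)) = 0 := by
        unfold pmfProb
        refine Finset.sum_eq_zero fun c _ => ?_
        split_ifs with h
        · have hlt : (2*B) ^ ρ < Pem W c m := not_le.mp h
          rw [← hB0', mul_zero, Real.zero_rpow hρ0.ne'] at hlt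
          have hpos : 0 < Pem W c m ^ (1/ρ) := Real.rpow_pos_of_pos hlt _
          rcases mul_eq_zero.mp (hall c) with h0 | h0
          · exact h0
          · exact absurd h0 hpos.ne'
        · rfl
      rw [this]; norm_num
    · -- B > 0 case
      have h2B : (0:ℝ) < 2*B := by linarith
      have hkey : pmfProb μ (fun c => ¬ (Pem W c m ≤ (2*B) ^ ρ)) * (2*B) ≤ B := by
        unfold pmfProb
        rw [Finset.sum_mul]
        refine le_trans (Finset.sum_le_sum (fun c _ => ?_)) (hexp m)
        split_ifs with h
        · have hlt : (2*B) ^ ρ < Pem W c m := not_le.mp h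
          have h3 : ((2*B) ^ ρ) ^ (1/ρ) ≤ Pem W c m ^ (1/ρ) :=
            Real.rpow_le_rpow (Real.rpow_nonneg h2B.le _) hlt.le hs0.le
          rw [← Real.rpow_mul h2B.le, mul_one_div_cancel hρ0.ne',
            Real.rpow_one] at h3
          exact mul_le_mul_of_nonneg_left h3 (hμpmf.1 c)
        · rw [zero_mul]
          exact mul_nonneg (hμpmf.1 c)
            (Real.rpow_nonneg (Pem_nonneg W hW0 c m) _)
      have hP := (le_div_iff₀ h2B).mpr hkey
      have hhalf : B / (2*B) = 1/2 := by rw [div_eq_iff h2B.ne']; ring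
      rwa [hhalf] at hP
  -- counting
  have hcount : ∑ c, μ c *
      ((Finset.univ.filter (fun m : Fin M' => ¬ (Pem W c m ≤ (2*B) ^ ρ))).card : ℝ)
      ≤ (M':ℝ)/2 := by
    have hcard : ∀ c : Fin M' → (Fin n → 𝒳),
        ((Finset.univ.filter (fun m : Fin M' => ¬ (Pem W c m ≤ (2*B) ^ ρ))).card : ℝ)
        = ∑ m : Fin M', (if ¬ (Pem W c m ≤ (2*B) ^ ρ) then (1:ℝ) else 0) := by
      intro c
      rw [Finset.card_filter]
      push_cast
      rfl
    calc ∑ c, μ c *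
        ((Finset.univ.filter (fun m : Fin M' => ¬ (Pem W c m ≤ (2*B) ^ ρ))).card : ℝ)
        = ∑ m : Fin M', pmfProb μ (fun c => ¬ (Pem W c m ≤ (2*B) ^ ρ)) := by
          unfold pmfProb
          simp_rw [hcard, Finset.mul_sum, mul_ite, mul_one, mul_zero]
          rw [Finset.sum_comm]
          exact Finset.sum_congr rfl fun m _ => Finset.sum_congr rfl fun c _ => by congr
      _ ≤ ∑ _m : Fin M', (1:ℝ)/2 := Finset.sum_le_sum fun m _ => hmarkov m
      _ = (M':ℝ)/2 := by
          rw [Finset.sum_const, Finset.card_univ, Fintype.card_fin, nsmul_eq_mul]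
          ring
  by_contra hcon
  push_neg at hcon
  have hbadge : ∀ c : Fin M' → (Fin n → 𝒳), (M:ℝ) ≤
      ((Finset.univ.filter (fun m : Fin M' => ¬ (Pem W c m ≤ (2*B) ^ ρ))).card : ℝ) := by
    intro c
    have hgood := hcon c
    have hsplit := Finset.card_filter_add_card_filter_not
      (s := (Finset.univ : Finset (Fin M')))
      (p := fun m : Fin M' => Pem W c m ≤ (2*B) ^ ρ)
    rw [Finset.card_univ, Fintype.card_fin] at hsplit
    have : M ≤ (Finset.univ.filter
        (fun m : Fin M' => ¬ (Pem W c m ≤ (2*B) ^ ρ))).card := by omega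
    exact_mod_cast this
  have hge : (M:ℝ) ≤ ∑ c, μ c *
      ((Finset.univ.filter (fun m : Fin M' => ¬ (Pem W c m ≤ (2*B) ^ ρ))).card : ℝ) := by
    calc (M:ℝ) = ∑ c, μ c * (M:ℝ) := by rw [← Finset.sum_mul, hμpmf.2, one_mul]
      _ ≤ _ := Finset.sum_le_sum fun c _ => mul_le_mul_of_nonneg_left (hbadge c) (hμpmf.1 c)
  have hM'cast : (M':ℝ) = 2*(M:ℝ) - 1 := by
    rw [hM'eq, Nat.cast_sub (by omega), Nat.cast_mul, Nat.cast_ofNat, Nat.cast_one]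
  have := hge.trans hcount
  rw [hM'cast] at this
  linarith
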